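/- (Verification of the Marchenko solution (5.8)) Let A, H, P be n×n complex matrices with all eigenvalues of A having positive real part, AH = HA, and AP + PA = BC, where B is n×2 and C is 2×n. Fix t ∈ ℝ and x ∈ ℝ such that M := I_n + e^{−xA}·e^{tH}·P·e^{−xA} is invertible, and define Ω(w) := C·e^{−wA}·e^{tH}·B for w ∈ ℝ and K(y) := −C·e^{−xA}·M⁻¹·e^{−yA}·e^{tH}·B for y ∈ ℝ. Then for every y ∈ ℝ the integral ∫_x^∞ K(z)·Ω(z+y) dz converges and K(y) + Ω(x+y) + ∫_x^∞ K(z)·Ω(z+y) dz = 0 (as 2×2 matrices). -/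

import Mathlib

open Matrix Complex MeasureTheory
open scoped Topology

attribute [local instance] Matrix.linftyOpSemiNormedRing Matrix.linftyOpNormedAddCommGroup
  Matrix.linftyOpNormedRing Matrix.linftyOpNormedSpace Matrix.linftyOpNormedAlgebra

noncomputable instance matContinuousENorm {m k : Type*} [Fintype m] [Fintype k] :
    ContinuousENorm (Matrix m k ℂ) :=
  SeminormedAddGroup.toContinuousENorm

instance matPseudoMetrizable {m k : Type*} [Fintype m] [Fintype k] :
    TopologicalSpace.PseudoMetrizableSpace (Matrix m k ℂ) :=
  inferInstanceAs (TopologicalSpace.PseudoMetrizableSpace (m → k → ℂ))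

namespace MarchenkoAux

open NormedSpace Filter Set

variable {n : ℕ}

/-- `X ↦ X.mulVec v` as a continuous linear map. -/
noncomputable def mulVecCLM (v : Fin n → ℂ) : Matrix (Fin n) (Fin n) ℂ →L[ℂ] (Fin n → ℂ) :=
  LinearMap.toContinuousLinearMap
    { toFun := fun X => X.mulVec v
      map_add' := fun X Y => Matrix.add_mulVec X Y v
      map_smul' := fun c X => Matrix.smul_mulVec c X v }

lemma pow_mulVec {A : Matrix (Fin n) (Fin n) ℂ} {μ : ℂ} {v : Fin n → ℂ}
    (h : A.mulVec v = μ • v) (k : ℕ) : (A ^ k).mulVec v = μ ^ k • v := by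
  induction k with
  | zero => simp [Matrix.one_mulVec]
  | succ k ih =>
      rw [pow_succ, ← Matrix.mulVec_mulVec, h, Matrix.mulVec_smul, ih, pow_succ, smul_smul,
        mul_comm]

lemma exp_mulVec {A : Matrix (Fin n) (Fin n) ℂ} {μ : ℂ} {v : Fin n → ℂ}
    (h : A.mulVec v = μ • v) :
    (NormedSpace.exp A).mulVec v = Complex.exp μ • v := by
  have h1 : (NormedSpace.exp A).mulVec v = mulVecCLM v (NormedSpace.exp A) := rfl
  have hsum : Summable (fun k : ℕ => ((k.factorial : ℂ))⁻¹ • A ^ k) :=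
    NormedSpace.expSeries_summable' (𝕂 := ℂ) A
  have hsumμ : Summable fun k : ℕ => ((k.factorial : ℂ))⁻¹ * μ ^ k := by
    simpa [smul_eq_mul] using NormedSpace.expSeries_summable' (𝕂 := ℂ) (𝔸 := ℂ) μ
  rw [h1, NormedSpace.exp_eq_tsum (𝕂 := ℂ)]
  beta_reduce
  rw [ContinuousLinearMap.map_tsum _ hsum]
  have h2 : ∀ k : ℕ, mulVecCLM v (((k.factorial : ℂ))⁻¹ • A ^ k) = (((k.factorial : ℂ))⁻¹ * μ ^ k) • v := by
    intro k
    have : mulVecCLM v (((k.factorial : ℂ))⁻¹ • A ^ k) = ((k.factorial : ℂ))⁻¹ • ((A ^ k).mulVec v) := by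
      rw [_root_.map_smul]; rfl
    rw [this, pow_mulVec h, smul_smul]
  rw [tsum_congr h2, hsumμ.tsum_smul_const]
  congr 1
  rw [Complex.exp_eq_exp_ℂ, NormedSpace.exp_eq_tsum (𝕂 := ℂ)]
  exact tsum_congr fun k => (smul_eq_mul ..).symm

lemma spec_exp {A : Matrix (Fin n) (Fin n) ℂ} {lam : ℂ}
    (hl : lam ∈ spectrum ℂ (NormedSpace.exp A)) :
    ∃ μ ∈ spectrum ℂ A, lam = Complex.exp μ := by
  classical
  set f : Module.End ℂ (Fin n → ℂ) := Matrix.toLinAlgEquiv' (NormedSpace.exp A) with hf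
  set a : Module.End ℂ (Fin n → ℂ) := Matrix.toLinAlgEquiv' A with ha
  have hfl : Module.End.HasEigenvalue f lam := by
    rw [Module.End.hasEigenvalue_iff_mem_spectrum]
    rwa [hf, AlgEquiv.spectrum_eq]
  have hAE : A * NormedSpace.exp A = NormedSpace.exp A * A :=
    ((Commute.refl A).exp_right).eq
  have hcomm : f * a = a * f := by
    rw [hf, ha, ← _root_.map_mul, ← _root_.map_mul, hAE]
  set W := Module.End.eigenspace f lam with hWdef
  have hinv : ∀ u ∈ W, a u ∈ W := by
    intro u hu
    rw [hWdef, Module.End.mem_eigenspace_iff] at hu ⊢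
    have : f (a u) = a (f u) := by
      rw [← Module.End.mul_apply, ← Module.End.mul_apply, hcomm]
    rw [this, hu, LinearMap.map_smul]
  obtain ⟨v, hv⟩ := hfl.exists_hasEigenvector
  haveI : Nontrivial W := by
    refine ⟨⟨⟨v, hv.1⟩, 0, ?_⟩⟩
    simp only [ne_eq, Submodule.mk_eq_zero]
    exact hv.2
  set a' : Module.End ℂ W := a.restrict hinv with ha'
  obtain ⟨μ, hμ⟩ := Module.End.exists_eigenvalue a'
  obtain ⟨w, hw⟩ := hμ.exists_hasEigenvector
  have hww : a (w : Fin n → ℂ) = μ • (w : Fin n → ℂ) := by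
    have h1 := hw.apply_eq_smul
    have h2 := congrArg (Subtype.val) h1
    simpa [ha', LinearMap.restrict_apply] using h2
  have hw0 : (w : Fin n → ℂ) ≠ 0 := fun hc => hw.2 (by simpa using Subtype.ext hc)
  have hmul : A.mulVec w = μ • (w : Fin n → ℂ) := by
    simpa [ha, Matrix.toLinAlgEquiv'_apply] using hww
  refine ⟨μ, ?_, ?_⟩
  · rw [← AlgEquiv.spectrum_eq (Matrix.toLinAlgEquiv' (R := ℂ) (n := Fin n)) A,
      ← Module.End.hasEigenvalue_iff_mem_spectrum]
    exact Module.End.hasEigenvalue_of_hasEigenvector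
      ⟨Module.End.mem_eigenspace_iff.mpr hww, hw0⟩
  · have h1 : (NormedSpace.exp A).mulVec w = Complex.exp μ • (w : Fin n → ℂ) :=
      exp_mulVec hmul
    have h2 : (NormedSpace.exp A).mulVec w = lam • (w : Fin n → ℂ) := by
      have := Module.End.mem_eigenspace_iff.mp w.2
      simpa [hf, Matrix.toLinAlgEquiv'_apply] using this
    have h3 : (lam - Complex.exp μ) • (w : Fin n → ℂ) = 0 := by
      rw [sub_smul, ← h1, ← h2, sub_self]
    rcases smul_eq_zero.mp h3 with h | h
    · exact sub_eq_zero.mp h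
    · exact absurd h hw0

lemma norm_exp_decay {A : Matrix (Fin n) (Fin n) ℂ}
    (hspec : ∀ μ ∈ spectrum ℂ A, 0 < μ.re) :
    ∃ c ε : ℝ, 0 < c ∧ 0 < ε ∧ ∀ z : ℝ, 0 ≤ z →
      ‖NormedSpace.exp (z • (-A))‖ ≤ c * Real.exp (-(ε * z)) := by
  have hgcont : Continuous (fun z : ℝ => NormedSpace.exp (z • (-A))) :=
    NormedSpace.exp_continuous.comp (continuous_id.smul continuous_const)
  rcases Nat.eq_zero_or_pos n with hn | hn
  · refine ⟨1, 1, one_pos, one_pos, fun z _ => ?_⟩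
    subst hn
    have h0 : NormedSpace.exp (z • (-A)) = 0 := Matrix.ext fun i _ => i.elim0
    rw [h0, norm_zero]
    positivity
  haveI : Nonempty (Fin n) := Fin.pos_iff_nonempty.mp hn
  set E := NormedSpace.exp (-A) with hE
  have hsr : spectralRadius ℂ E < 1 := by
    refine spectrum.spectralRadius_lt_of_forall_lt_of_nonempty (spectrum.nonempty E) ?_
    intro k hk
    obtain ⟨μ, hμ, rfl⟩ := spec_exp hk
    have hμ' : -μ ∈ spectrum ℂ A := Set.mem_neg.mp (by rwa [spectrum.neg_eq] )
    have hre : μ.re < 0 := by have := hspec _ hμ'; simpa using this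
    have : ‖Complex.exp μ‖ < 1 := by
      rw [Complex.norm_exp]
      exact Real.exp_lt_one_iff.mpr hre
    exact_mod_cast this
  obtain ⟨r, hr1, hr2⟩ := exists_between hsr
  have hrtop : r ≠ ⊤ := (hr2.trans_le le_top).ne
  set ρ : NNReal := r.toNNReal with hρdef
  have hρ : (ρ : ENNReal) = r := ENNReal.coe_toNNReal hrtop
  have hρpos : 0 < (ρ : ℝ) := by
    have : (0 : ENNReal) < r := zero_le.trans_lt hr1
    have : ρ ≠ 0 := by
      intro h
      rw [h] at hρ
      simp [← hρ] at this
    exact lt_of_le_of_ne (ρ.2) (by exact_mod_cast (Ne.symm this))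
  have hρlt1 : (ρ : ℝ) < 1 := by
    have : (ρ : ENNReal) < 1 := hρ ▸ hr2
    exact_mod_cast this
  have hev : ∀ᶠ m : ℕ in atTop, (‖E ^ m‖₊ : ENNReal) ^ (1 / (m : ℝ)) < r :=
    (spectrum.pow_nnnorm_pow_one_div_tendsto_nhds_spectralRadius E).eventually_lt_const hr1
  obtain ⟨N, hN⟩ := eventually_atTop.mp hev
  set N₀ : ℕ := max N 1 with hN₀
  have hpow : ∀ m : ℕ, N₀ ≤ m → ‖E ^ m‖ ≤ (ρ : ℝ) ^ m := by
    intro m hm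
    have hm1 : 1 ≤ m := le_trans (le_max_right _ _) hm
    have hm0 : (m : ℝ) ≠ 0 := by positivity
    have h1 := hN m (le_trans (le_max_left _ _) hm)
    have e1 : ((‖E ^ m‖₊ : ENNReal) ^ ((1 : ℝ) / (m : ℝ))) ^ (m : ℝ)
        = (‖E ^ m‖₊ : ENNReal) := by
      rw [← ENNReal.rpow_mul, one_div, inv_mul_cancel₀ hm0, ENNReal.rpow_one]
    have h2 : (‖E ^ m‖₊ : ENNReal) ≤ r ^ (m : ℝ) := by
      calc (‖E ^ m‖₊ : ENNReal) = _ := e1.symm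
        _ ≤ r ^ (m : ℝ) := ENNReal.rpow_le_rpow h1.le (by positivity)
    have h3 : (‖E ^ m‖₊ : ENNReal) ≤ ((ρ ^ m : NNReal) : ENNReal) := by
      rw [ENNReal.coe_pow, hρ, ← ENNReal.rpow_natCast r m]
      exact h2
    have h4 : ‖E ^ m‖₊ ≤ ρ ^ m := ENNReal.coe_le_coe.mp h3
    calc ‖E ^ m‖ = ((‖E ^ m‖₊ : NNReal) : ℝ) := rfl
      _ ≤ ((ρ ^ m : NNReal) : ℝ) := by exact_mod_cast h4
      _ = (ρ : ℝ) ^ m := by push_cast; ring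
  obtain ⟨c₂, hc₂⟩ := (isCompact_Icc (a := (0:ℝ)) (b := (N₀ : ℝ) + 1)).exists_bound_of_continuousOn
    hgcont.continuousOn
  have hc₂0 : 0 ≤ c₂ := le_trans (norm_nonneg _) (hc₂ 0 ⟨le_refl _, by positivity⟩)
  set ε : ℝ := -Real.log ρ with hεdef
  have hε : 0 < ε := by
    have := Real.log_neg hρpos hρlt1
    simp only [hεdef]; linarith
  refine ⟨(c₂ + 1) * Real.exp (ε * ((N₀ : ℝ) + 1)), ε, by positivity, hε, ?_⟩
  intro z hz
  set m : ℕ := ⌊z⌋₊ with hm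
  have hm_le : (m : ℝ) ≤ z := Nat.floor_le hz
  have hz_lt : z < m + 1 := Nat.lt_floor_add_one z
  by_cases hzN : z < (N₀ : ℝ)
  · have h1 : ‖NormedSpace.exp (z • (-A))‖ ≤ c₂ := hc₂ z ⟨hz, by linarith⟩
    have h2 : (1 : ℝ) ≤ Real.exp (ε * ((N₀ : ℝ) + 1)) * Real.exp (-(ε * z)) := by
      rw [← Real.exp_add]
      refine Real.one_le_exp ?_
      nlinarith
    calc ‖NormedSpace.exp (z • (-A))‖ ≤ c₂ := h1
      _ = c₂ * 1 := by ring
      _ ≤ (c₂ + 1) * (Real.exp (ε * ((N₀ : ℝ) + 1)) * Real.exp (-(ε * z))) := by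
          apply mul_le_mul (by linarith) h2 zero_le_one (by linarith)
      _ = (c₂ + 1) * Real.exp (ε * ((N₀ : ℝ) + 1)) * Real.exp (-(ε * z)) := by ring
  · push_neg at hzN
    have hmN : N₀ ≤ m := Nat.le_floor hzN
    have hsplit : NormedSpace.exp (z • (-A)) = E ^ m * NormedSpace.exp ((z - m) • (-A)) := by
      have hcm : Commute ((m : ℝ) • (-A)) ((z - m) • (-A)) :=
        ((Commute.refl (-A)).smul_left _).smul_right _
      have : z • (-A) = (m : ℝ) • (-A) + (z - m) • (-A) := by
        rw [← add_smul]; ring_nf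
      rw [this, Matrix.exp_add_of_commute _ _ hcm]
      congr 1
      rw [Nat.cast_smul_eq_nsmul ℝ m (-A), Matrix.exp_nsmul]
    have hN₀1 : (1 : ℝ) ≤ (N₀ : ℝ) := by exact_mod_cast le_max_right N 1
    have hrest : ‖NormedSpace.exp ((z - m) • (-A))‖ ≤ c₂ :=
      hc₂ _ ⟨by linarith, by linarith⟩
    have hEb := hpow m hmN
    have key : ‖NormedSpace.exp (z • (-A))‖ ≤ (ρ : ℝ) ^ m * c₂ := by
      rw [hsplit]
      exact le_trans (norm_mul_le _ _)
        (mul_le_mul hEb hrest (norm_nonneg _) (by positivity))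
    have hρm : (ρ : ℝ) ^ m = Real.exp ((m : ℝ) * Real.log ρ) := by
      rw [Real.exp_nat_mul, Real.exp_log hρpos]
    have hlog : Real.log ρ < 0 := Real.log_neg hρpos hρlt1
    have hmono : (m : ℝ) * Real.log ρ ≤ (z - 1) * Real.log ρ := by
      apply mul_le_mul_of_nonpos_right (by linarith) hlog.le
    have h5 : (ρ : ℝ) ^ m ≤ Real.exp (ε * 1 + -(ε * z)) := by
      rw [hρm]
      apply Real.exp_le_exp.mpr
      have : (z - 1) * Real.log ρ = ε * 1 + -(ε * z) := by
        simp only [hεdef]; ring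
      linarith [hmono, le_of_eq this]
    calc ‖NormedSpace.exp (z • (-A))‖ ≤ (ρ : ℝ) ^ m * c₂ := key
      _ ≤ Real.exp (ε * 1 + -(ε * z)) * c₂ := by
          apply mul_le_mul_of_nonneg_right h5 hc₂0
      _ = c₂ * Real.exp (ε * 1) * Real.exp (-(ε * z)) := by rw [Real.exp_add]; ring
      _ ≤ (c₂ + 1) * Real.exp (ε * ((N₀ : ℝ) + 1)) * Real.exp (-(ε * z)) := by
          have hN1 : (1 : ℝ) ≤ (N₀ : ℝ) + 1 := by have : (0:ℝ) ≤ (N₀ : ℝ) := Nat.cast_nonneg _; linarith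
          have := Real.exp_le_exp.mpr (by nlinarith [hε.le] : ε * 1 ≤ ε * ((N₀ : ℝ) + 1))
          apply mul_le_mul_of_nonneg_right _ (Real.exp_nonneg _)
          exact mul_le_mul (by linarith) this (Real.exp_nonneg _) (by linarith)

/-- The one-parameter semigroup `z ↦ exp(-zA)`. -/
noncomputable def gmat (A : Matrix (Fin n) (Fin n) ℂ) (z : ℝ) : Matrix (Fin n) (Fin n) ℂ :=
  NormedSpace.exp (z • (-A))

lemma gmat_eq (A : Matrix (Fin n) (Fin n) ℂ) (w : ℝ) :
    NormedSpace.exp (-(w • A)) = gmat A w := by rw [gmat, smul_neg]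

lemma gmat_add (A : Matrix (Fin n) (Fin n) ℂ) (a b : ℝ) :
    gmat A (a + b) = gmat A a * gmat A b := by
  rw [gmat, gmat, gmat, add_smul]
  exact Matrix.exp_add_of_commute _ _ (((Commute.refl (-A)).smul_left a).smul_right b)

lemma gmat_cont (A : Matrix (Fin n) (Fin n) ℂ) : Continuous (gmat A) :=
  NormedSpace.exp_continuous.comp (continuous_id.smul continuous_const)

lemma gmat_deriv (A : Matrix (Fin n) (Fin n) ℂ) (z : ℝ) :
    HasDerivAt (gmat A) (gmat A z * (-A)) z := by
  have h := hasDerivAt_exp_smul_const (𝕂 := ℝ) (-A) z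
  simp only [gmat]
  exact h

lemma gmat_deriv' (A : Matrix (Fin n) (Fin n) ℂ) (z : ℝ) :
    HasDerivAt (gmat A) ((-A) * gmat A z) z := by
  have h := hasDerivAt_exp_smul_const' (𝕂 := ℝ) (-A) z
  simp only [gmat]
  exact h

lemma sandwich_deriv (A Q : Matrix (Fin n) (Fin n) ℂ) (z : ℝ) :
    HasDerivAt (fun w => gmat A w * Q * gmat A w)
      (-(gmat A z * (A * Q + Q * A) * gmat A z)) z := by
  have h1 := ((gmat_deriv A z).mul_const Q).mul (gmat_deriv' A z)
  convert h1 using 1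
  · rfl
  · rfl
  · rfl
  · rfl
  noncomm_ring

lemma sandwich_integrable {A : Matrix (Fin n) (Fin n) ℂ}
    (hspec : ∀ μ ∈ spectrum ℂ A, 0 < μ.re) (Q : Matrix (Fin n) (Fin n) ℂ) (x : ℝ) :
    IntegrableOn (fun z => -(gmat A z * Q * gmat A z)) (Set.Ioi x) := by
  obtain ⟨c, ε, hc, hε, hb⟩ := norm_exp_decay hspec
  have hb' : ∀ z : ℝ, 0 ≤ z → ‖gmat A z‖ ≤ c * Real.exp (-(ε * z)) := hb
  have hcont : Continuous (fun z => -(gmat A z * Q * gmat A z)) :=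
    (((gmat_cont A).mul continuous_const).mul (gmat_cont A)).neg
  have h2 : IntegrableOn (fun z => -(gmat A z * Q * gmat A z)) (Set.Ioi (max x 0)) := by
    have hgi : IntegrableOn (fun z => (c * c * ‖Q‖) * Real.exp (-(2 * ε) * z))
        (Set.Ioi (max x 0)) :=
      (exp_neg_integrableOn_Ioi _ (by positivity)).const_mul _
    refine Integrable.mono' hgi hcont.aestronglyMeasurable.restrict ?_
    filter_upwards [ae_restrict_mem measurableSet_Ioi] with z hz
    have hz0 : (0 : ℝ) ≤ z := le_trans (le_max_right x 0) (le_of_lt hz)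
    have h := hb' z hz0
    calc ‖-(gmat A z * Q * gmat A z)‖ = ‖gmat A z * Q * gmat A z‖ := norm_neg _
      _ ≤ ‖gmat A z * Q‖ * ‖gmat A z‖ := norm_mul_le _ _
      _ ≤ ‖gmat A z‖ * ‖Q‖ * ‖gmat A z‖ :=
          mul_le_mul_of_nonneg_right (norm_mul_le _ _) (norm_nonneg _)
      _ ≤ (c * Real.exp (-(ε * z))) * ‖Q‖ * (c * Real.exp (-(ε * z))) := by
          apply mul_le_mul (mul_le_mul_of_nonneg_right h (norm_nonneg _)) h (norm_nonneg _)
          positivity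
      _ = c * c * ‖Q‖ * (Real.exp (-(ε * z)) * Real.exp (-(ε * z))) := by ring
      _ = c * c * ‖Q‖ * Real.exp (-(2 * ε) * z) := by
          rw [← Real.exp_add]; congr 1; ring
  have h1 : IntegrableOn (fun z => -(gmat A z * Q * gmat A z)) (Set.Ioc x (max x 0)) :=
    hcont.integrableOn_Ioc
  have h3 := h1.union h2
  rwa [Set.Ioc_union_Ioi_eq_Ioi (le_max_left x 0)] at h3

lemma sandwich_tendsto {A : Matrix (Fin n) (Fin n) ℂ}
    (hspec : ∀ μ ∈ spectrum ℂ A, 0 < μ.re) (Q : Matrix (Fin n) (Fin n) ℂ) :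
    Tendsto (fun z => gmat A z * Q * gmat A z) atTop (𝓝 0) := by
  obtain ⟨c, ε, hc, hε, hb⟩ := norm_exp_decay hspec
  have hb' : ∀ z : ℝ, 0 ≤ z → ‖gmat A z‖ ≤ c * Real.exp (-(ε * z)) := hb
  refine squeeze_zero_norm' (a := fun z => c * c * ‖Q‖ * Real.exp (-(2 * ε) * z)) ?_ ?_
  · filter_upwards [eventually_ge_atTop (0 : ℝ)] with z hz0
    have h := hb' z hz0
    calc ‖gmat A z * Q * gmat A z‖ ≤ ‖gmat A z * Q‖ * ‖gmat A z‖ := norm_mul_le _ _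
      _ ≤ ‖gmat A z‖ * ‖Q‖ * ‖gmat A z‖ :=
          mul_le_mul_of_nonneg_right (norm_mul_le _ _) (norm_nonneg _)
      _ ≤ (c * Real.exp (-(ε * z))) * ‖Q‖ * (c * Real.exp (-(ε * z))) := by
          apply mul_le_mul (mul_le_mul_of_nonneg_right h (norm_nonneg _)) h (norm_nonneg _)
          positivity
      _ = c * c * ‖Q‖ * (Real.exp (-(ε * z)) * Real.exp (-(ε * z))) := by ring
      _ = c * c * ‖Q‖ * Real.exp (-(2 * ε) * z) := by
          rw [← Real.exp_add]; congr 1; ring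
  · have h1 : Tendsto (fun z : ℝ => (2 * ε) * z) atTop atTop :=
      tendsto_id.const_mul_atTop (by positivity)
    have h2 : Tendsto (fun z : ℝ => Real.exp (-((2 * ε) * z))) atTop (𝓝 0) :=
      Real.tendsto_exp_atBot.comp (tendsto_neg_atTop_atBot.comp h1)
    have h3 : Tendsto (fun z : ℝ => c * c * ‖Q‖ * Real.exp (-((2 * ε) * z))) atTop
        (𝓝 (c * c * ‖Q‖ * 0)) := h2.const_mul _
    simpa only [neg_mul, mul_zero] using h3

lemma sandwich_integral {A : Matrix (Fin n) (Fin n) ℂ}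
    (hspec : ∀ μ ∈ spectrum ℂ A, 0 < μ.re) (Q : Matrix (Fin n) (Fin n) ℂ) (x : ℝ) :
    ∫ z in Set.Ioi x, -(gmat A z * (A * Q + Q * A) * gmat A z)
      = -(gmat A x * Q * gmat A x) := by
  have h := integral_Ioi_of_hasDerivAt_of_tendsto'
    (f := fun w => gmat A w * Q * gmat A w)
    (f' := fun z => -(gmat A z * (A * Q + Q * A) * gmat A z))
    (fun z _ => sandwich_deriv A Q z)
    (sandwich_integrable hspec _ x) (sandwich_tendsto hspec Q)
  rw [h, zero_sub]

/-- entry of a matrix as a continuous linear map -/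
noncomputable def entryCLM {p q : ℕ} (i : Fin p) (j : Fin q) :
    Matrix (Fin p) (Fin q) ℂ →L[ℂ] ℂ :=
  LinearMap.toContinuousLinearMap
    { toFun := fun X => X i j
      map_add' := fun _ _ => rfl
      map_smul' := fun _ _ => rfl }

@[simp] lemma entryCLM_apply {p q : ℕ} (i : Fin p) (j : Fin q)
    (X : Matrix (Fin p) (Fin q) ℂ) : entryCLM i j X = X i j := rfl

/-- `X ↦ L * X * R` as a continuous linear map -/
noncomputable def conjCLM (L : Matrix (Fin 2) (Fin n) ℂ) (R : Matrix (Fin n) (Fin 2) ℂ) :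
    Matrix (Fin n) (Fin n) ℂ →L[ℂ] Matrix (Fin 2) (Fin 2) ℂ :=
  LinearMap.toContinuousLinearMap
    { toFun := fun X => L * X * R
      map_add' := fun X Y => by
        show L * (X + Y) * R = L * X * R + L * Y * R
        rw [Matrix.mul_add, Matrix.add_mul]
      map_smul' := fun c X => by
        show L * (c • X) * R = c • (L * X * R)
        rw [Matrix.mul_smul, Matrix.smul_mul] }

@[simp] lemma conjCLM_apply (L : Matrix (Fin 2) (Fin n) ℂ) (R : Matrix (Fin n) (Fin 2) ℂ)
    (X : Matrix (Fin n) (Fin n) ℂ) : conjCLM L R X = L * X * R := rfl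

end MarchenkoAux

open MarchenkoAux

/-- verification of the Marchenko solution (5.8): with all
eigenvalues of A of positive real part, AH = HA, AP + PA = BC, and
M := I + e^{−xA}e^{tH}Pe^{−xA} invertible, the function
K(y) := −C e^{−xA} M⁻¹ e^{−yA} e^{tH} B solves the Marchenko equation
K(y) + Ω(x+y) + ∫_x^∞ K(z)Ω(z+y) dz = 0 with Ω(w) := C e^{−wA} e^{tH} B,
the integral converging entrywise. -/
theorem marchenko_solution_verification (n : ℕ)
    (A H P : Matrix (Fin n) (Fin n) ℂ)
    (B : Matrix (Fin n) (Fin 2) ℂ) (C : Matrix (Fin 2) (Fin n) ℂ)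
    (hspec : ∀ μ ∈ spectrum ℂ A, 0 < μ.re)
    (hcomm : A * H = H * A)
    (hSyl : A * P + P * A = B * C)
    (t x : ℝ)
    (M : Matrix (Fin n) (Fin n) ℂ)
    (hMdef : M = 1 + NormedSpace.exp (-(x • A)) * NormedSpace.exp (t • H) * P *
      NormedSpace.exp (-(x • A)))
    (hM : IsUnit M)
    (Ω : ℝ → Matrix (Fin 2) (Fin 2) ℂ)
    (hΩdef : ∀ w : ℝ, Ω w = C * NormedSpace.exp (-(w • A)) * NormedSpace.exp (t • H) * B)
    (K : ℝ → Matrix (Fin 2) (Fin 2) ℂ)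
    (hKdef : ∀ y : ℝ, K y = -(C * NormedSpace.exp (-(x • A)) * M⁻¹ *
      NormedSpace.exp (-(y • A)) * NormedSpace.exp (t • H) * B)) :
    ∀ y : ℝ,
      (∀ j k : Fin 2, IntegrableOn (fun z : ℝ => (K z * Ω (z + y)) j k) (Set.Ioi x)) ∧
      K y + Ω (x + y) +
        (Matrix.of fun j k => ∫ z in Set.Ioi x, (K z * Ω (z + y)) j k) = 0 := by
  intro y
  set eH : Matrix (Fin n) (Fin n) ℂ := NormedSpace.exp (t • H) with heH
  -- rewrite hypotheses in terms of gmat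
  rw [gmat_eq] at hMdef
  have hK' : ∀ w : ℝ, K w = -(C * gmat A x * M⁻¹ * gmat A w * eH * B) := by
    intro w; rw [hKdef, gmat_eq, gmat_eq]
  have hΩ' : ∀ w : ℝ, Ω w = C * gmat A w * eH * B := by
    intro w; rw [hΩdef, gmat_eq]
  -- the commuting exponential
  have hAH : Commute A H := hcomm
  have hAeH : A * eH = eH * A := ((hAH.smul_right t).exp_right).eq
  -- Q and its Sylvester identity
  set Q : Matrix (Fin n) (Fin n) ℂ := eH * P with hQdef
  have hQ : A * Q + Q * A = eH * (B * C) := by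
    rw [hQdef]
    calc A * (eH * P) + eH * P * A
        = eH * (A * P) + eH * (P * A) := by rw [← Matrix.mul_assoc, hAeH, Matrix.mul_assoc,
          Matrix.mul_assoc]
      _ = eH * (A * P + P * A) := by rw [Matrix.mul_add]
      _ = eH * (B * C) := by rw [hSyl]
  -- the inner integrand
  set D : ℝ → Matrix (Fin n) (Fin n) ℂ :=
    fun z => -(gmat A z * (A * Q + Q * A) * gmat A z) with hD
  have hDint : IntegrableOn D (Set.Ioi x) := sandwich_integrable hspec _ x
  have hDval : ∫ z in Set.Ioi x, D z = -(gmat A x * Q * gmat A x) :=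
    sandwich_integral hspec Q x
  -- the Marchenko integrand as a CLM image of D
  set L : Matrix (Fin 2) (Fin n) ℂ := C * gmat A x * M⁻¹ with hL
  set R : Matrix (Fin n) (Fin 2) ℂ := gmat A y * eH * B with hR
  have hKO : ∀ z : ℝ, K z * Ω (z + y) = conjCLM L R (D z) := by
    intro z
    rw [hK' z, hΩ' (z + y), gmat_add A z y, conjCLM_apply, hD, hQ, hL, hR]
    simp only [Matrix.neg_mul, Matrix.mul_neg, neg_inj, Matrix.mul_assoc]
  have hFmInt : IntegrableOn (fun z => K z * Ω (z + y)) (Set.Ioi x) := by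
    have h1 := (conjCLM L R).integrable_comp hDint
    have heq : (fun z => K z * Ω (z + y)) = fun z => conjCLM L R (D z) := funext hKO
    rw [heq]
    exact h1
  constructor
  · intro j k
    have h2 := (entryCLM j k).integrable_comp hFmInt
    exact h2
  · have hof : (Matrix.of fun j k => ∫ z in Set.Ioi x, (K z * Ω (z + y)) j k)
        = ∫ z in Set.Ioi x, K z * Ω (z + y) := by
      ext j k
      rw [Matrix.of_apply]
      calc (∫ z in Set.Ioi x, (K z * Ω (z + y)) j k)
          = ∫ z in Set.Ioi x, entryCLM j k (K z * Ω (z + y)) := by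
            simp only [entryCLM_apply]
        _ = entryCLM j k (∫ z in Set.Ioi x, K z * Ω (z + y)) :=
            (entryCLM j k).integral_comp_comm hFmInt
        _ = (∫ z in Set.Ioi x, K z * Ω (z + y)) j k := by rw [entryCLM_apply]
    rw [hof]
    have hIntVal : (∫ z in Set.Ioi x, K z * Ω (z + y)) = conjCLM L R (-(gmat A x * Q * gmat A x)) := by
      have heq : (fun z => K z * Ω (z + y)) = fun z => conjCLM L R (D z) := funext hKO
      rw [heq]
      exact ((conjCLM L R).integral_comp_comm hDint).trans (congrArg _ hDval)
    rw [hIntVal, conjCLM_apply]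
    -- pure matrix algebra
    have hMinv : M⁻¹ * M = 1 := Matrix.nonsing_inv_mul M ((Matrix.isUnit_iff_isUnit_det M).mp hM)
    have hcanc : ∀ X : Matrix (Fin n) (Fin 2) ℂ, M⁻¹ * (M * X) = X := fun X => by
      rw [← Matrix.mul_assoc, hMinv, Matrix.one_mul]
    have hMm1 : gmat A x * Q * gmat A x = M - 1 := by
      rw [hMdef, hQdef, add_sub_cancel_left]
      simp only [Matrix.mul_assoc]
    rw [hK' y, hΩ' (x + y), gmat_add A x y, hMm1, hL, hR]
    simp only [Matrix.mul_neg, Matrix.neg_mul, neg_neg, Matrix.mul_sub, Matrix.sub_mul,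
      Matrix.mul_one, Matrix.one_mul]
    simp only [Matrix.mul_assoc, hcanc]
    abel
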